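/- Let C and E be categories with finite limits, let a be an object of C, and let G, G' : Over a ⥤ E be functors preserving finite limits. Write T = Over.mk (𝟙 a) for the terminal object of Over a, and δ : T ⟶ (Over.star a).obj a for the morphism in Over a whose underlying morphism is the diagonal a ⟶ a ⨯ a. Suppose ψ : Over.star a ⋙ G ≅ Over.star a ⋙ G' is a natural isomorphism such that G.map δ ≫ ψ.app a = ι ≫ G'.map δ, where ι : G.obj T ⟶ G'.obj T is the unique isomorphism between these two terminal objects of E. Then there exists a natural isomorphism Φ : G ≅ G' such that Φ.app ((Over.star a).obj b) = ψ.app b for every object b of C. -/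

import Mathlib

open CategoryTheory CategoryTheory.Limits

noncomputable section

variable {C : Type*} [Category C] [HasFiniteLimits C]

/-- The morphism in `Over a` from the terminal object `Over.mk (𝟙 a)` to
`(Over.star a).obj a` whose underlying morphism is the diagonal `a ⟶ a ⨯ a`. -/
def sliceDiag (a : C) : Over.mk (𝟙 a) ⟶ (Over.star a).obj a :=
  Over.homMk (prod.lift (𝟙 a) (𝟙 a)) (by simp; erw [prod.lift_fst, prod.lift_fst])

/-- The image of the terminal object of `Over a` under a finite-limit preserving functor is
terminal. -/
def terminalObjOfLex {E : Type*} [Category E] [HasFiniteLimits E]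
    {a : C} (G : Over a ⥤ E) [PreservesFiniteLimits G] :
    IsTerminal (G.obj (Over.mk (𝟙 a))) :=
  Over.mkIdTerminal.isTerminalObj G _

attribute [local simp] prod.lift_fst prod.lift_snd prod.lift_fst_assoc prod.lift_snd_assoc

namespace Stmt3Aux

variable {a : C}

/-- The unit-like map `X ⟶ a ⨯ X.left` over `a`. -/
def unitMap (X : Over a) : X ⟶ (Over.star a).obj X.left :=
  Over.homMk (prod.lift X.hom (𝟙 X.left)) (by simp; erw [prod.lift_fst, prod.lift_fst])

lemma from_left (X : Over a) (g : X ⟶ Over.mk (𝟙 a)) : g.left = X.hom := by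
  simpa using Over.w g

/-- First parallel map. -/
def uMap (X : Over a) : (Over.star a).obj X.left ⟶ (Over.star a).obj a :=
  (Over.star a).map X.hom

/-- Second parallel map. -/
def vMap (X : Over a) : (Over.star a).obj X.left ⟶ (Over.star a).obj a :=
  Over.mkIdTerminal.from _ ≫ sliceDiag a

lemma fork_w (X : Over a) : unitMap X ≫ uMap X = unitMap X ≫ vMap X := by
  apply Over.OverMorphism.ext
  simp only [unitMap, uMap, vMap, Over.comp_left, Over.homMk_left, Over.star_map_left,
    sliceDiag, from_left]
  change (prod.lift X.hom (𝟙 X.left) ≫ prod.map (𝟙 a) X.hom : X.left ⟶ a ⨯ a) =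
    prod.lift X.hom (𝟙 X.left) ≫ (prod.lift prod.fst (𝟙 (a ⨯ X.left)) ≫ prod.fst) ≫
      prod.lift (𝟙 a) (𝟙 a)
  apply Limits.prod.hom_ext <;> simp

lemma fork_lift_aux (X T : Over a) (f : T.left ⟶ a ⨯ X.left)
    (w : f ≫ (prod.lift prod.fst (𝟙 (a ⨯ X.left)) ≫ prod.fst) = T.hom)
    (c : f ≫ prod.map (𝟙 a) X.hom =
      f ≫ (prod.lift prod.fst (𝟙 (a ⨯ X.left)) ≫ prod.fst) ≫ prod.lift (𝟙 a) (𝟙 a)) :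
    (f ≫ prod.snd) ≫ X.hom = T.hom ∧ (f ≫ prod.snd) ≫ prod.lift X.hom (𝟙 X.left) = f := by
  simp only [prod.lift_fst] at w c
  have h2 := congrArg (· ≫ (prod.snd : a ⨯ a ⟶ a)) c
  simp only [Category.assoc, prod.map_snd, prod.lift_snd, Category.comp_id] at h2
  refine ⟨by rw [Category.assoc, h2, w], ?_⟩
  apply Limits.prod.hom_ext
  · simp only [Category.assoc, prod.lift_fst]
    rw [h2]
  · simp

/-- `X` is the equalizer of `uMap X` and `vMap X`. -/
def forkIsLimit (X : Over a) : IsLimit (Fork.ofι (unitMap X) (fork_w X)) := by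
  refine Fork.IsLimit.mk _ (fun s => Over.homMk (s.ι.left ≫ prod.snd) ?_)
    (fun s => ?_) (fun s m hm => ?_)
  · have h := congrArg CommaMorphism.left s.condition
    simp only [uMap, vMap, Over.comp_left, Over.star_map_left, sliceDiag,
      Over.homMk_left, from_left, parallelPair_obj_zero, Over.star_obj_hom] at h
    exact (fork_lift_aux X s.pt s.ι.left (Over.w s.ι) h).1
  · apply Over.OverMorphism.ext
    have h := congrArg CommaMorphism.left s.condition
    simp only [uMap, vMap, Over.comp_left, Over.star_map_left, sliceDiag,
      Over.homMk_left, from_left, parallelPair_obj_zero, Over.star_obj_hom] at h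
    exact (fork_lift_aux X s.pt s.ι.left (Over.w s.ι) h).2
  · apply Over.OverMorphism.ext
    have h := congrArg CommaMorphism.left hm
    show m.left = s.ι.left ≫ prod.snd
    have h' : m.left ≫ (unitMap X).left = s.ι.left := h
    change m.left ≫ (prod.lift X.hom (𝟙 X.left) : X.left ⟶ a ⨯ X.left) = s.ι.left at h'
    have := congrArg (· ≫ (prod.snd : a ⨯ X.left ⟶ X.left)) h'
    simp [Category.assoc] at this
    exact this

lemma comm_unit {X Y : Over a} (g : X ⟶ Y) :
    g ≫ unitMap Y = unitMap X ≫ (Over.star a).map g.left := by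
  apply Over.OverMorphism.ext
  simp only [unitMap, Over.comp_left, Over.homMk_left, Over.star_map_left]
  change (g.left ≫ prod.lift Y.hom (𝟙 Y.left) : X.left ⟶ a ⨯ Y.left) =
    prod.lift X.hom (𝟙 X.left) ≫ prod.map (𝟙 a) g.left
  apply Limits.prod.hom_ext <;> simp

lemma unit_star_snd (b : C) :
    unitMap ((Over.star a).obj b) ≫ (Over.star a).map (prod.snd : a ⨯ b ⟶ b) =
      𝟙 ((Over.star a).obj b) := by
  apply Over.OverMorphism.ext
  simp only [unitMap, Over.comp_left, Over.homMk_left, Over.star_map_left, Over.id_left]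
  change (prod.lift (prod.lift prod.fst (𝟙 (a ⨯ b)) ≫ prod.fst) (𝟙 (a ⨯ b)) ≫
    prod.map (𝟙 a) (prod.snd : a ⨯ b ⟶ b) : a ⨯ b ⟶ a ⨯ b) = 𝟙 (a ⨯ b)
  apply Limits.prod.hom_ext <;> simp [Over.star_obj_hom]

lemma unit_star_fst (b : C) :
    unitMap ((Over.star a).obj b) ≫ (Over.star a).map (prod.fst : a ⨯ b ⟶ a) =
      Over.mkIdTerminal.from _ ≫ sliceDiag a := by
  apply Over.OverMorphism.ext
  simp only [unitMap, Over.comp_left, Over.homMk_left, Over.star_map_left, sliceDiag,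
    from_left]
  change (prod.lift (prod.lift prod.fst (𝟙 (a ⨯ b)) ≫ prod.fst) (𝟙 (a ⨯ b)) ≫
    prod.map (𝟙 a) (prod.fst : a ⨯ b ⟶ a) : a ⨯ b ⟶ a ⨯ a) =
      (prod.lift prod.fst (𝟙 (a ⨯ b)) ≫ prod.fst) ≫ prod.lift (𝟙 a) (𝟙 a)
  apply Limits.prod.hom_ext <;> simp [Over.star_obj_hom]

end Stmt3Aux

open Stmt3Aux

/-- Uniqueness half of the cocomma universal property of the slice. Given
lex functors `G, G' : Over a ⥤ E` and a natural isomorphism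
`ψ : Over.star a ⋙ G ≅ Over.star a ⋙ G'` compatible with the diagonal `δ` (via the unique
isomorphism `ι` between the images of the terminal object), there is a natural isomorphism
`Φ : G ≅ G'` restricting to `ψ` along `Over.star a`. -/
theorem stmt_3 {E : Type*} [Category E] [HasFiniteLimits E]
    (a : C) (G G' : Over a ⥤ E) [PreservesFiniteLimits G] [PreservesFiniteLimits G']
    (ψ : Over.star a ⋙ G ≅ Over.star a ⋙ G')
    (hψ : G.map (sliceDiag a) ≫ ψ.hom.app a =
      ((terminalObjOfLex G).uniqueUpToIso (terminalObjOfLex G')).hom ≫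
        G'.map (sliceDiag a)) :
    ∃ Φ : G ≅ G', ∀ b : C, Φ.hom.app ((Over.star a).obj b) = ψ.hom.app b := by
  -- the images under `G` and `G'` of the canonical equalizer forks are limit forks
  have limG : ∀ X : Over a,
      IsLimit (Fork.ofι (G.map (unitMap X))
        (by simp only [← G.map_comp, fork_w]) : Fork (G.map (uMap X)) (G.map (vMap X))) :=
    fun X => isLimitForkMapOfIsLimit G (fork_w X) (forkIsLimit X)
  have limG' : ∀ X : Over a,
      IsLimit (Fork.ofι (G'.map (unitMap X))
        (by simp only [← G'.map_comp, fork_w]) : Fork (G'.map (uMap X)) (G'.map (vMap X))) :=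
    fun X => isLimitForkMapOfIsLimit G' (fork_w X) (forkIsLimit X)
  -- compatibility of `ψ` with the two parallel maps
  have hu : ∀ X : Over a,
      ψ.hom.app X.left ≫ G'.map (uMap X) = G.map (uMap X) ≫ ψ.hom.app a := by
    intro X
    simpa [uMap] using (ψ.hom.naturality X.hom).symm
  have hterm : ∀ X : Over a,
      ψ.hom.app X.left ≫ G'.map (Over.mkIdTerminal.from ((Over.star a).obj X.left)) =
        G.map (Over.mkIdTerminal.from ((Over.star a).obj X.left)) ≫
          ((terminalObjOfLex G).uniqueUpToIso (terminalObjOfLex G')).hom := by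
    intro X
    exact (terminalObjOfLex G').hom_ext _ _
  have hv : ∀ X : Over a,
      ψ.hom.app X.left ≫ G'.map (vMap X) = G.map (vMap X) ≫ ψ.hom.app a := by
    intro X
    rw [vMap, G'.map_comp, G.map_comp, ← Category.assoc, hterm X, Category.assoc,
      ← hψ, Category.assoc]
  have huI : ∀ X : Over a,
      ψ.inv.app X.left ≫ G.map (uMap X) = G'.map (uMap X) ≫ ψ.inv.app a := by
    intro X
    have h : ψ.inv.app X.left ≫ (ψ.hom.app X.left ≫ G'.map (uMap X)) ≫ ψ.inv.app a
        = ψ.inv.app X.left ≫ (G.map (uMap X) ≫ ψ.hom.app a) ≫ ψ.inv.app a := by rw [hu X]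
    simpa using h.symm
  have hvI : ∀ X : Over a,
      ψ.inv.app X.left ≫ G.map (vMap X) = G'.map (vMap X) ≫ ψ.inv.app a := by
    intro X
    have h : ψ.inv.app X.left ≫ (ψ.hom.app X.left ≫ G'.map (vMap X)) ≫ ψ.inv.app a
        = ψ.inv.app X.left ≫ (G.map (vMap X) ≫ ψ.hom.app a) ≫ ψ.inv.app a := by rw [hv X]
    simpa using h.symm
  -- components of the natural isomorphism
  have hwF : ∀ X : Over a, (G.map (unitMap X) ≫ ψ.hom.app X.left) ≫ G'.map (uMap X) =
      (G.map (unitMap X) ≫ ψ.hom.app X.left) ≫ G'.map (vMap X) := by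
    intro X
    rw [Category.assoc, Category.assoc, hu X, hv X, ← Category.assoc, ← Category.assoc,
      ← G.map_comp, ← G.map_comp, fork_w]
  have hwB : ∀ X : Over a, (G'.map (unitMap X) ≫ ψ.inv.app X.left) ≫ G.map (uMap X) =
      (G'.map (unitMap X) ≫ ψ.inv.app X.left) ≫ G.map (vMap X) := by
    intro X
    rw [Category.assoc, Category.assoc, huI X, hvI X, ← Category.assoc, ← Category.assoc,
      ← G'.map_comp, ← G'.map_comp, fork_w]
  let φ : ∀ X : Over a, G.obj X ⟶ G'.obj X :=
    fun X => (Fork.IsLimit.lift' (limG' X) (G.map (unitMap X) ≫ ψ.hom.app X.left) (hwF X)).1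
  let χ : ∀ X : Over a, G'.obj X ⟶ G.obj X :=
    fun X => (Fork.IsLimit.lift' (limG X) (G'.map (unitMap X) ≫ ψ.inv.app X.left) (hwB X)).1
  have hφ : ∀ X : Over a, φ X ≫ G'.map (unitMap X) = G.map (unitMap X) ≫ ψ.hom.app X.left :=
    fun X => (Fork.IsLimit.lift' (limG' X) _ (hwF X)).2
  have hχ : ∀ X : Over a, χ X ≫ G.map (unitMap X) = G'.map (unitMap X) ≫ ψ.inv.app X.left :=
    fun X => (Fork.IsLimit.lift' (limG X) _ (hwB X)).2
  have hφχ : ∀ X : Over a, φ X ≫ χ X = 𝟙 _ := by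
    intro X
    apply Fork.IsLimit.hom_ext (limG X)
    rw [Fork.ι_ofι, Category.assoc, hχ X, ← Category.assoc, hφ X]
    simp
  have hχφ : ∀ X : Over a, χ X ≫ φ X = 𝟙 _ := by
    intro X
    apply Fork.IsLimit.hom_ext (limG' X)
    rw [Fork.ι_ofι, Category.assoc, hφ X, ← Category.assoc, hχ X]
    simp
  have hnat : ∀ {X Y : Over a} (g : X ⟶ Y), G.map g ≫ φ Y = φ X ≫ G'.map g := by
    intro X Y g
    apply Fork.IsLimit.hom_ext (limG' Y)
    rw [Fork.ι_ofι, Category.assoc, hφ Y, Category.assoc, ← G'.map_comp, comm_unit g,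
      G'.map_comp, ← Category.assoc _ _ (G'.map ((Over.star a).map g.left)),
      hφ X, Category.assoc]
    have := ψ.hom.naturality g.left
    simp only [Functor.comp_map] at this
    rw [← this, ← Category.assoc, ← Category.assoc, ← G.map_comp, ← G.map_comp, comm_unit g]
  refine ⟨NatIso.ofComponents (fun X => ⟨φ X, χ X, hφχ X, hχφ X⟩) (fun g => hnat g), ?_⟩
  -- the restriction along `Over.star a` agrees with `ψ`
  intro b
  show φ ((Over.star a).obj b) = ψ.hom.app b
  haveI : PreservesLimitsOfSize.{0, 0} (Over.star a) :=
    (Over.forgetAdjStar a).rightAdjoint_preservesLimits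
  have fan1 : IsLimit (BinaryFan.mk ((Over.star a).map (prod.fst : a ⨯ b ⟶ a))
      ((Over.star a).map (prod.snd : a ⨯ b ⟶ b))) :=
    mapIsLimitOfPreservesOfIsLimit (Over.star a) _ _ (prodIsProd a b)
  have fan2 : IsLimit (BinaryFan.mk (G'.map ((Over.star a).map (prod.fst : a ⨯ b ⟶ a)))
      (G'.map ((Over.star a).map (prod.snd : a ⨯ b ⟶ b)))) :=
    mapIsLimitOfPreservesOfIsLimit G' _ _ fan1
  apply Fork.IsLimit.hom_ext (limG' ((Over.star a).obj b))
  rw [Fork.ι_ofι, hφ]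
  apply BinaryFan.IsLimit.hom_ext fan2
  · show (G.map (unitMap ((Over.star a).obj b)) ≫ ψ.hom.app ((Over.star a).obj b).left) ≫
        G'.map ((Over.star a).map (prod.fst : a ⨯ b ⟶ a)) =
      (ψ.hom.app b ≫ G'.map (unitMap ((Over.star a).obj b))) ≫
        G'.map ((Over.star a).map (prod.fst : a ⨯ b ⟶ a))
    have hnb : ψ.hom.app ((Over.star a).obj b).left ≫
        G'.map ((Over.star a).map (prod.fst : a ⨯ b ⟶ a)) =
        G.map ((Over.star a).map (prod.fst : a ⨯ b ⟶ a)) ≫ ψ.hom.app a :=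
      (ψ.hom.naturality (prod.fst : a ⨯ b ⟶ a)).symm
    have hterm2 : ψ.hom.app b ≫ G'.map (Over.mkIdTerminal.from ((Over.star a).obj b)) =
        G.map (Over.mkIdTerminal.from ((Over.star a).obj b)) ≫
          ((terminalObjOfLex G).uniqueUpToIso (terminalObjOfLex G')).hom :=
      (terminalObjOfLex G').hom_ext _ _
    erw [Category.assoc, Category.assoc, hnb, ← Category.assoc, ← G.map_comp,
      unit_star_fst b, G.map_comp, Category.assoc, hψ, ← Category.assoc, ← hterm2,
      Category.assoc, ← G'.map_comp, ← unit_star_fst b, G'.map_comp]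
  · show (G.map (unitMap ((Over.star a).obj b)) ≫ ψ.hom.app ((Over.star a).obj b).left) ≫
        G'.map ((Over.star a).map (prod.snd : a ⨯ b ⟶ b)) =
      (ψ.hom.app b ≫ G'.map (unitMap ((Over.star a).obj b))) ≫
        G'.map ((Over.star a).map (prod.snd : a ⨯ b ⟶ b))
    have hnb : ψ.hom.app ((Over.star a).obj b).left ≫
        G'.map ((Over.star a).map (prod.snd : a ⨯ b ⟶ b)) =
        G.map ((Over.star a).map (prod.snd : a ⨯ b ⟶ b)) ≫ ψ.hom.app b :=
      (ψ.hom.naturality (prod.snd : a ⨯ b ⟶ b)).symm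
    erw [Category.assoc, Category.assoc, hnb, ← Category.assoc, ← G.map_comp,
      unit_star_snd b, G.map_id, Category.id_comp, ← G'.map_comp, unit_star_snd b]
    simp

end
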